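/- Let I ⊆ L be the ℤ-span of {x − g₁·x : x ∈ L} ∪ {x − g₂·x : x ∈ L}, and let v₁ := (0, e₉ − e₁) and v₂ := (0, e₁₀ − e₁) (where e_i are standard basis vectors of ℤ¹⁰; these are the classes σ×μ − σ×σ and σ×ν − σ×σ). Then 3v₁ ∈ I and 3v₂ ∈ I but v₁ ∉ I and v₂ ∉ I, so the classes of v₁ and v₂ in L/I have order exactly 3, and these two classes generate the torsion subgroup of L/I, which is isomorphic to ℤ/3 ⊕ ℤ/3. -/

import Mathlib

open Matrix

/-- The generator `g₁` of the ℤ₃×ℤ₃ action on the degree-2 homology lattice of the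
ℤ₃×ℤ₃-symmetric dP₉ surface, in the basis (σ, f, θ₁₁, θ₂₁, θ₃₁, θ₃₂, θ₄₁, θ₄₂, μ, ν). -/
def g1mat : Matrix (Fin 10) (Fin 10) ℤ :=
  !![0,0,0,3,0,0,0,0,-1,-1;
     0,1,0,3,0,1,0,1,-1,-1;
     0,0,1,0,0,0,0,0,0,0;
     0,0,0,-2,0,0,0,0,1,0;
     0,0,0,-2,0,-1,0,0,1,1;
     0,0,0,-1,1,-1,0,0,0,1;
     0,0,0,-2,0,0,0,-1,1,1;
     0,0,0,-1,0,0,1,-1,0,0;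
     1,0,0,-3,0,0,0,0,2,1;
     0,0,0,0,0,0,0,0,0,1]

/-- The generator `g₂` of the ℤ₃×ℤ₃ action. -/
def g2mat : Matrix (Fin 10) (Fin 10) ℤ :=
  !![0,0,3,0,0,0,0,0,-1,-1;
     0,1,3,0,1,0,0,1,-1,-1;
     0,0,-2,0,0,0,0,0,0,1;
     0,0,0,1,0,0,0,0,0,0;
     0,0,-1,0,-1,1,0,0,1,0;
     0,0,-2,0,-1,0,0,0,1,1;
     0,0,-2,0,0,0,0,-1,1,1;
     0,0,-1,0,0,0,1,-1,0,0;
     0,0,0,0,0,0,0,0,1,0;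
     1,0,-3,0,0,0,0,0,1,2]

/-- The fiber class `f`. -/
def fvec : Fin 10 → ℤ := ![0,1,0,0,0,0,0,0,0,0]

/-- The ambient rank-20 lattice ℤ¹⁰ ⊕ ℤ¹⁰. -/
abbrev Wlat := (Fin 10 → ℤ) × (Fin 10 → ℤ)

/-- The linear form ℓ(x) = x₁ + x₉ + x₁₀. -/
def ell (x : Fin 10 → ℤ) : ℤ := x 0 + x 8 + x 9

/-- The diagonal action of a matrix `g` on ℤ¹⁰ ⊕ ℤ¹⁰. -/
def act (g : Matrix (Fin 10) (Fin 10) ℤ) (x : Wlat) : Wlat :=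
  (g.mulVec x.1, g.mulVec x.2)

/-- The rank-19 lattice `L = {(a,b) : ℓ(a) = ℓ(b)}` realizing the curve
representation `R = H₂(X̃,ℤ)` of ℤ₃×ℤ₃ on the curve classes of the covering
Calabi-Yau threefold `X̃`. -/
def Lsub : Submodule ℤ Wlat where
  carrier := {x | ell x.1 = ell x.2}
  add_mem' := by
    intro a b ha hb
    simp only [Set.mem_setOf_eq, ell, Prod.fst_add, Prod.snd_add, Pi.add_apply] at *
    omega
  zero_mem' := by simp [ell]
  smul_mem' := by
    intro c x hx
    simp only [Set.mem_setOf_eq, ell, Prod.smul_fst, Prod.smul_snd, Pi.smul_apply,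
      smul_eq_mul] at *
    linear_combination c * hx

/-- The submodule of relations `I = span_ℤ({x − g₁·x : x ∈ L} ∪ {x − g₂·x : x ∈ L})`. -/
def Isub : Submodule ℤ Wlat :=
  Submodule.span ℤ
    {y : Wlat | ∃ x : Wlat, ell x.1 = ell x.2 ∧ (y = x - act g1mat x ∨ y = x - act g2mat x)}

/-- `v₁ = (0, e₉ − e₁)`, the class of `σ×μ − σ×σ`. -/
def v1 : Wlat := (0, ![-1,0,0,0,0,0,0,0,1,0])

/-- `v₂ = (0, e₁₀ − e₁)`, the class of `σ×ν − σ×σ`. -/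
def v2 : Wlat := (0, ![-1,0,0,0,0,0,0,0,0,1])
namespace TCG

private lemma fmk0 (h : 0 < 10) : (⟨0, h⟩ : Fin 10) = 0 := rfl
private lemma fmk1 (h : 1 < 10) : (⟨1, h⟩ : Fin 10) = 1 := rfl
private lemma fmk2 (h : 2 < 10) : (⟨2, h⟩ : Fin 10) = 2 := rfl
private lemma fmk3 (h : 3 < 10) : (⟨3, h⟩ : Fin 10) = 3 := rfl
private lemma fmk4 (h : 4 < 10) : (⟨4, h⟩ : Fin 10) = 4 := rfl
private lemma fmk5 (h : 5 < 10) : (⟨5, h⟩ : Fin 10) = 5 := rfl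
private lemma fmk6 (h : 6 < 10) : (⟨6, h⟩ : Fin 10) = 6 := rfl
private lemma fmk7 (h : 7 < 10) : (⟨7, h⟩ : Fin 10) = 7 := rfl
private lemma fmk8 (h : 8 < 10) : (⟨8, h⟩ : Fin 10) = 8 := rfl
private lemma fmk9 (h : 9 < 10) : (⟨9, h⟩ : Fin 10) = 9 := rfl

private lemma vio0 (e0 e1 e2 e3 e4 e5 e6 e7 e8 e9 : ℤ) : (![e0, e1, e2, e3, e4, e5, e6, e7, e8, e9] : Fin 10 → ℤ) 0 = e0 := rfl
private lemma vio1 (e0 e1 e2 e3 e4 e5 e6 e7 e8 e9 : ℤ) : (![e0, e1, e2, e3, e4, e5, e6, e7, e8, e9] : Fin 10 → ℤ) 1 = e1 := rfl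
private lemma vio2 (e0 e1 e2 e3 e4 e5 e6 e7 e8 e9 : ℤ) : (![e0, e1, e2, e3, e4, e5, e6, e7, e8, e9] : Fin 10 → ℤ) 2 = e2 := rfl
private lemma vio3 (e0 e1 e2 e3 e4 e5 e6 e7 e8 e9 : ℤ) : (![e0, e1, e2, e3, e4, e5, e6, e7, e8, e9] : Fin 10 → ℤ) 3 = e3 := rfl
private lemma vio4 (e0 e1 e2 e3 e4 e5 e6 e7 e8 e9 : ℤ) : (![e0, e1, e2, e3, e4, e5, e6, e7, e8, e9] : Fin 10 → ℤ) 4 = e4 := rfl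
private lemma vio5 (e0 e1 e2 e3 e4 e5 e6 e7 e8 e9 : ℤ) : (![e0, e1, e2, e3, e4, e5, e6, e7, e8, e9] : Fin 10 → ℤ) 5 = e5 := rfl
private lemma vio6 (e0 e1 e2 e3 e4 e5 e6 e7 e8 e9 : ℤ) : (![e0, e1, e2, e3, e4, e5, e6, e7, e8, e9] : Fin 10 → ℤ) 6 = e6 := rfl
private lemma vio7 (e0 e1 e2 e3 e4 e5 e6 e7 e8 e9 : ℤ) : (![e0, e1, e2, e3, e4, e5, e6, e7, e8, e9] : Fin 10 → ℤ) 7 = e7 := rfl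
private lemma vio8 (e0 e1 e2 e3 e4 e5 e6 e7 e8 e9 : ℤ) : (![e0, e1, e2, e3, e4, e5, e6, e7, e8, e9] : Fin 10 → ℤ) 8 = e8 := rfl
private lemma vio9 (e0 e1 e2 e3 e4 e5 e6 e7 e8 e9 : ℤ) : (![e0, e1, e2, e3, e4, e5, e6, e7, e8, e9] : Fin 10 → ℤ) 9 = e9 := rfl

private lemma g1mv0 (a : Fin 10 → ℤ) : g1mat.mulVec a 0 = 0 * a 0 + (0 * a 1 + (0 * a 2 + (3 * a 3 + (0 * a 4 + (0 * a 5 + (0 * a 6 + (0 * a 7 + ((-1) * a 8 + ((-1) * a 9 + (0)))))))))) := rfl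
private lemma g1mv1 (a : Fin 10 → ℤ) : g1mat.mulVec a 1 = 0 * a 0 + (1 * a 1 + (0 * a 2 + (3 * a 3 + (0 * a 4 + (1 * a 5 + (0 * a 6 + (1 * a 7 + ((-1) * a 8 + ((-1) * a 9 + (0)))))))))) := rfl
private lemma g1mv2 (a : Fin 10 → ℤ) : g1mat.mulVec a 2 = 0 * a 0 + (0 * a 1 + (1 * a 2 + (0 * a 3 + (0 * a 4 + (0 * a 5 + (0 * a 6 + (0 * a 7 + (0 * a 8 + (0 * a 9 + (0)))))))))) := rfl
private lemma g1mv3 (a : Fin 10 → ℤ) : g1mat.mulVec a 3 = 0 * a 0 + (0 * a 1 + (0 * a 2 + ((-2) * a 3 + (0 * a 4 + (0 * a 5 + (0 * a 6 + (0 * a 7 + (1 * a 8 + (0 * a 9 + (0)))))))))) := rfl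
private lemma g1mv4 (a : Fin 10 → ℤ) : g1mat.mulVec a 4 = 0 * a 0 + (0 * a 1 + (0 * a 2 + ((-2) * a 3 + (0 * a 4 + ((-1) * a 5 + (0 * a 6 + (0 * a 7 + (1 * a 8 + (1 * a 9 + (0)))))))))) := rfl
private lemma g1mv5 (a : Fin 10 → ℤ) : g1mat.mulVec a 5 = 0 * a 0 + (0 * a 1 + (0 * a 2 + ((-1) * a 3 + (1 * a 4 + ((-1) * a 5 + (0 * a 6 + (0 * a 7 + (0 * a 8 + (1 * a 9 + (0)))))))))) := rfl
private lemma g1mv6 (a : Fin 10 → ℤ) : g1mat.mulVec a 6 = 0 * a 0 + (0 * a 1 + (0 * a 2 + ((-2) * a 3 + (0 * a 4 + (0 * a 5 + (0 * a 6 + ((-1) * a 7 + (1 * a 8 + (1 * a 9 + (0)))))))))) := rfl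
private lemma g1mv7 (a : Fin 10 → ℤ) : g1mat.mulVec a 7 = 0 * a 0 + (0 * a 1 + (0 * a 2 + ((-1) * a 3 + (0 * a 4 + (0 * a 5 + (1 * a 6 + ((-1) * a 7 + (0 * a 8 + (0 * a 9 + (0)))))))))) := rfl
private lemma g1mv8 (a : Fin 10 → ℤ) : g1mat.mulVec a 8 = 1 * a 0 + (0 * a 1 + (0 * a 2 + ((-3) * a 3 + (0 * a 4 + (0 * a 5 + (0 * a 6 + (0 * a 7 + (2 * a 8 + (1 * a 9 + (0)))))))))) := rfl
private lemma g1mv9 (a : Fin 10 → ℤ) : g1mat.mulVec a 9 = 0 * a 0 + (0 * a 1 + (0 * a 2 + (0 * a 3 + (0 * a 4 + (0 * a 5 + (0 * a 6 + (0 * a 7 + (0 * a 8 + (1 * a 9 + (0)))))))))) := rfl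
private lemma g2mv0 (a : Fin 10 → ℤ) : g2mat.mulVec a 0 = 0 * a 0 + (0 * a 1 + (3 * a 2 + (0 * a 3 + (0 * a 4 + (0 * a 5 + (0 * a 6 + (0 * a 7 + ((-1) * a 8 + ((-1) * a 9 + (0)))))))))) := rfl
private lemma g2mv1 (a : Fin 10 → ℤ) : g2mat.mulVec a 1 = 0 * a 0 + (1 * a 1 + (3 * a 2 + (0 * a 3 + (1 * a 4 + (0 * a 5 + (0 * a 6 + (1 * a 7 + ((-1) * a 8 + ((-1) * a 9 + (0)))))))))) := rfl
private lemma g2mv2 (a : Fin 10 → ℤ) : g2mat.mulVec a 2 = 0 * a 0 + (0 * a 1 + ((-2) * a 2 + (0 * a 3 + (0 * a 4 + (0 * a 5 + (0 * a 6 + (0 * a 7 + (0 * a 8 + (1 * a 9 + (0)))))))))) := rfl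
private lemma g2mv3 (a : Fin 10 → ℤ) : g2mat.mulVec a 3 = 0 * a 0 + (0 * a 1 + (0 * a 2 + (1 * a 3 + (0 * a 4 + (0 * a 5 + (0 * a 6 + (0 * a 7 + (0 * a 8 + (0 * a 9 + (0)))))))))) := rfl
private lemma g2mv4 (a : Fin 10 → ℤ) : g2mat.mulVec a 4 = 0 * a 0 + (0 * a 1 + ((-1) * a 2 + (0 * a 3 + ((-1) * a 4 + (1 * a 5 + (0 * a 6 + (0 * a 7 + (1 * a 8 + (0 * a 9 + (0)))))))))) := rfl
private lemma g2mv5 (a : Fin 10 → ℤ) : g2mat.mulVec a 5 = 0 * a 0 + (0 * a 1 + ((-2) * a 2 + (0 * a 3 + ((-1) * a 4 + (0 * a 5 + (0 * a 6 + (0 * a 7 + (1 * a 8 + (1 * a 9 + (0)))))))))) := rfl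
private lemma g2mv6 (a : Fin 10 → ℤ) : g2mat.mulVec a 6 = 0 * a 0 + (0 * a 1 + ((-2) * a 2 + (0 * a 3 + (0 * a 4 + (0 * a 5 + (0 * a 6 + ((-1) * a 7 + (1 * a 8 + (1 * a 9 + (0)))))))))) := rfl
private lemma g2mv7 (a : Fin 10 → ℤ) : g2mat.mulVec a 7 = 0 * a 0 + (0 * a 1 + ((-1) * a 2 + (0 * a 3 + (0 * a 4 + (0 * a 5 + (1 * a 6 + ((-1) * a 7 + (0 * a 8 + (0 * a 9 + (0)))))))))) := rfl
private lemma g2mv8 (a : Fin 10 → ℤ) : g2mat.mulVec a 8 = 0 * a 0 + (0 * a 1 + (0 * a 2 + (0 * a 3 + (0 * a 4 + (0 * a 5 + (0 * a 6 + (0 * a 7 + (1 * a 8 + (0 * a 9 + (0)))))))))) := rfl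
private lemma g2mv9 (a : Fin 10 → ℤ) : g2mat.mulVec a 9 = 1 * a 0 + (0 * a 1 + ((-3) * a 2 + (0 * a 3 + (0 * a 4 + (0 * a 5 + (0 * a 6 + (0 * a 7 + (1 * a 8 + (2 * a 9 + (0)))))))))) := rfl

private def phi1 : Wlat →ₗ[ℤ] ℤ where
  toFun x := x.1 0 + x.1 8 + x.1 9
  map_add' x y := by
    simp only [Prod.fst_add, Prod.snd_add, Pi.add_apply]; ring
  map_smul' m x := by
    simp only [Prod.smul_fst, Prod.smul_snd, Pi.smul_apply, smul_eq_mul, RingHom.id_apply]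
    ring

private def phi2 : Wlat →ₗ[ℤ] ℤ where
  toFun x := (3) * x.1 1 + x.1 2 + x.1 3 + x.1 4 + x.1 5 + x.1 6 + x.1 7
  map_add' x y := by
    simp only [Prod.fst_add, Prod.snd_add, Pi.add_apply]; ring
  map_smul' m x := by
    simp only [Prod.smul_fst, Prod.smul_snd, Pi.smul_apply, smul_eq_mul, RingHom.id_apply]
    ring

private def phi3 : Wlat →ₗ[ℤ] ℤ where
  toFun x := (3) * x.2 1 + x.2 2 + x.2 3 + x.2 4 + x.2 5 + x.2 6 + x.2 7
  map_add' x y := by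
    simp only [Prod.fst_add, Prod.snd_add, Pi.add_apply]; ring
  map_smul' m x := by
    simp only [Prod.smul_fst, Prod.smul_snd, Pi.smul_apply, smul_eq_mul, RingHom.id_apply]
    ring

private def qa : Wlat →ₗ[ℤ] ℤ where
  toFun x := (2) * x.1 8 + x.2 8
  map_add' x y := by
    simp only [Prod.fst_add, Prod.snd_add, Pi.add_apply]; ring
  map_smul' m x := by
    simp only [Prod.smul_fst, Prod.smul_snd, Pi.smul_apply, smul_eq_mul, RingHom.id_apply]
    ring

private def qb : Wlat →ₗ[ℤ] ℤ where
  toFun x := x.1 0 + x.1 8 + x.2 9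
  map_add' x y := by
    simp only [Prod.fst_add, Prod.snd_add, Pi.add_apply]; ring
  map_smul' m x := by
    simp only [Prod.smul_fst, Prod.smul_snd, Pi.smul_apply, smul_eq_mul, RingHom.id_apply]
    ring

private def c3 : ℤ →ₗ[ℤ] ZMod 3 where
  toFun n := (n : ZMod 3)
  map_add' x y := by push_cast; ring
  map_smul' m x := by
    simp only [smul_eq_mul, RingHom.id_apply, zsmul_eq_mul]; push_cast; ring

private def Qmap : Wlat →ₗ[ℤ] ZMod 3 × ZMod 3 := (c3.comp qa).prod (c3.comp qb)

private def Pmap : Wlat →ₗ[ℤ] ℤ × ℤ × ℤ := phi1.prod (phi2.prod phi3)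

private lemma I_le_kerQ : Isub ≤ LinearMap.ker Qmap := by
  rw [Isub, Submodule.span_le]
  rintro y ⟨⟨a, b⟩, hx, rfl | rfl⟩ <;>
  · simp only [ell] at hx
    simp only [SetLike.mem_coe, LinearMap.mem_ker, Qmap, Pmap, c3, qa, qb, phi1, phi2, phi3, LinearMap.prod_apply, Function.prod, LinearMap.comp_apply, LinearMap.coe_mk, AddHom.coe_mk, act, Prod.fst_sub, Prod.snd_sub, Pi.sub_apply, g1mv0, g1mv1, g1mv2, g1mv3, g1mv4, g1mv5, g1mv6, g1mv7, g1mv8, g1mv9, g2mv0, g2mv1, g2mv2, g2mv3, g2mv4, g2mv5, g2mv6, g2mv7, g2mv8, g2mv9]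
    rw [Prod.mk_eq_zero]
    constructor <;> · rw [ZMod.intCast_zmod_eq_zero_iff_dvd]; omega

private lemma I_le_kerP : Isub ≤ LinearMap.ker Pmap := by
  rw [Isub, Submodule.span_le]
  rintro y ⟨⟨a, b⟩, hx, rfl | rfl⟩ <;>
  · simp only [ell] at hx
    simp only [SetLike.mem_coe, LinearMap.mem_ker, Qmap, Pmap, c3, qa, qb, phi1, phi2, phi3, LinearMap.prod_apply, Function.prod, LinearMap.comp_apply, LinearMap.coe_mk, AddHom.coe_mk, act, Prod.fst_sub, Prod.snd_sub, Pi.sub_apply, g1mv0, g1mv1, g1mv2, g1mv3, g1mv4, g1mv5, g1mv6, g1mv7, g1mv8, g1mv9, g2mv0, g2mv1, g2mv2, g2mv3, g2mv4, g2mv5, g2mv6, g2mv7, g2mv8, g2mv9]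
    rw [Prod.mk_eq_zero, Prod.mk_eq_zero]
    refine ⟨by omega, by omega, by omega⟩

private lemma qv11 : Qmap v1 = (1, 0) := by decide
private lemma qv22 : Qmap v2 = (0, 1) := by decide

private lemma v1_not : v1 ∉ Isub := by
  intro h
  have h2 := I_le_kerQ h
  rw [LinearMap.mem_ker, qv11] at h2
  exact absurd h2 (by decide)

private lemma v2_not : v2 ∉ Isub := by
  intro h
  have h2 := I_le_kerQ h
  rw [LinearMap.mem_ker, qv22] at h2
  exact absurd h2 (by decide)

private def w1 : Wlat := (![0,0,0,0,0,0,0,0,0,0], ![0,0,0,1,0,-2,-1,-1,3,-3])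
private def w2a : Wlat := (![3,0,0,0,0,-2,-3,-1,0,-3], ![0,0,0,0,0,0,0,0,0,0])
private def w2b : Wlat := (![0,0,-1,0,0,0,0,0,0,-3], ![-3,0,0,0,0,0,0,0,0,0])

private lemma three_v1 : (3 : ℤ) • v1 ∈ Isub := by
  have m : w1 - act g1mat w1 ∈ Isub :=
    Submodule.subset_span ⟨w1, by decide, Or.inl rfl⟩
  have e : (3 : ℤ) • v1 = w1 - act g1mat w1 := by decide
  rw [e]; exact m

private lemma three_v2 : (3 : ℤ) • v2 ∈ Isub := by
  have m1 : w2a - act g1mat w2a ∈ Isub :=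
    Submodule.subset_span ⟨w2a, by decide, Or.inl rfl⟩
  have m2 : w2b - act g2mat w2b ∈ Isub :=
    Submodule.subset_span ⟨w2b, by decide, Or.inr rfl⟩
  have e : (3 : ℤ) • v2 = (w2a - act g1mat w2a) + (w2b - act g2mat w2b) := by decide
  rw [e]; exact Submodule.add_mem _ m1 m2

private lemma key (a b : Fin 10 → ℤ) (h0 : ell a = ell b)
    (h1 : phi1 (a, b) = 0) (h2 : phi2 (a, b) = 0) (h3 : phi3 (a, b) = 0) :
    ((a, b) : Wlat) - ((3*a 7 - a 8 - 3*b 7 + b 8) • v1 + (a 0 + a 8 - b 0 - b 8) • v2) ∈ Isub := by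
  set Y : Wlat := ((![-a 2 + a 6 + a 7 - a 8, 0, 0, a 7, -2*a 1 - a 3 - a 5 - a 6, -a 1 - a 6 - a 7, 0, 0, -a 3 + 3*a 7, a 2 + a 3 - a 6 - a 7], ![3*a 7 - a 8 - 3*b 1 - 2*b 2 - b 3 - b 4 - b 5 - 3*b 7, 0, 0, b 7, b 1 + b 2 + b 4 + b 7, 2*b 1 + b 2 + b 3 + b 4 + b 5, 0, 0, -b 3 + 3*b 7, 3*b 1 + 2*b 2 + 2*b 3 + b 4 + b 5]) : Wlat) with hYdef
  set Z : Wlat := ((![a 0 + a 2 + a 8, 0, 0, 0, 0, 0, 0, 0, 0, -a 2], ![a 0 + a 8 + b 2, 0, 0, 0, 0, 0, 0, 0, 0, -b 2]) : Wlat) with hZdef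
  have hY : ell Y.1 = ell Y.2 := by
    simp only [hYdef, ell, vio0, vio1, vio2, vio3, vio4, vio5, vio6, vio7, vio8, vio9]; ring
  have hZ : ell Z.1 = ell Z.2 := by
    simp only [hZdef, ell, vio0, vio1, vio2, vio3, vio4, vio5, vio6, vio7, vio8, vio9]; ring
  have m1 : Y - act g1mat Y ∈ Isub := Submodule.subset_span ⟨Y, hY, Or.inl rfl⟩
  have m2 : Z - act g2mat Z ∈ Isub := Submodule.subset_span ⟨Z, hZ, Or.inr rfl⟩
  have heq : ((a, b) : Wlat) - ((3*a 7 - a 8 - 3*b 7 + b 8) • v1 + (a 0 + a 8 - b 0 - b 8) • v2)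
      = (Y - act g1mat Y) + (Z - act g2mat Z) := by
    simp only [ell] at h0
    simp only [phi1, phi2, phi3, LinearMap.coe_mk, AddHom.coe_mk] at h1 h2 h3
    have hfst : (((a, b) : Wlat) - ((3*a 7 - a 8 - 3*b 7 + b 8) • v1 + (a 0 + a 8 - b 0 - b 8) • v2)).1
        = ((Y - act g1mat Y) + (Z - act g2mat Z)).1 := by
      funext j
      fin_cases j <;>
      · simp only [hYdef, hZdef, v1, v2, act, Prod.fst_sub, Prod.snd_sub, Prod.fst_add,
          Prod.snd_add, Prod.smul_fst, Prod.smul_snd, Pi.sub_apply, Pi.add_apply,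
          Pi.smul_apply, Pi.zero_apply, smul_eq_mul, mul_zero, fmk0, fmk1, fmk2, fmk3, fmk4, fmk5, fmk6, fmk7, fmk8, fmk9,
          g1mv0, g1mv1, g1mv2, g1mv3, g1mv4, g1mv5, g1mv6, g1mv7, g1mv8, g1mv9, g2mv0, g2mv1, g2mv2, g2mv3, g2mv4, g2mv5, g2mv6, g2mv7, g2mv8, g2mv9, vio0, vio1, vio2, vio3, vio4, vio5, vio6, vio7, vio8, vio9]
        omega
    have hsnd : (((a, b) : Wlat) - ((3*a 7 - a 8 - 3*b 7 + b 8) • v1 + (a 0 + a 8 - b 0 - b 8) • v2)).2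
        = ((Y - act g1mat Y) + (Z - act g2mat Z)).2 := by
      funext j
      fin_cases j <;>
      · simp only [hYdef, hZdef, v1, v2, act, Prod.fst_sub, Prod.snd_sub, Prod.fst_add,
          Prod.snd_add, Prod.smul_fst, Prod.smul_snd, Pi.sub_apply, Pi.add_apply,
          Pi.smul_apply, Pi.zero_apply, smul_eq_mul, mul_zero, fmk0, fmk1, fmk2, fmk3, fmk4, fmk5, fmk6, fmk7, fmk8, fmk9,
          g1mv0, g1mv1, g1mv2, g1mv3, g1mv4, g1mv5, g1mv6, g1mv7, g1mv8, g1mv9, g2mv0, g2mv1, g2mv2, g2mv3, g2mv4, g2mv5, g2mv6, g2mv7, g2mv8, g2mv9, vio0, vio1, vio2, vio3, vio4, vio5, vio6, vio7, vio8, vio9]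
        omega
    exact Prod.ext hfst hsnd
  rw [heq]; exact Submodule.add_mem _ m1 m2

end TCG

open TCG in
theorem torsion_curve_generators :
    (3 : ℤ) • v1 ∈ Isub ∧ (3 : ℤ) • v2 ∈ Isub ∧ v1 ∉ Isub ∧ v2 ∉ Isub ∧
    ∀ (h1 : v1 ∈ Lsub) (h2 : v2 ∈ Lsub),
      addOrderOf (Submodule.Quotient.mk (p := Isub.comap Lsub.subtype) ⟨v1, h1⟩) = 3 ∧
      addOrderOf (Submodule.Quotient.mk (p := Isub.comap Lsub.subtype) ⟨v2, h2⟩) = 3 ∧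
      Submodule.span ℤ
          {Submodule.Quotient.mk (p := Isub.comap Lsub.subtype) ⟨v1, h1⟩,
           Submodule.Quotient.mk (p := Isub.comap Lsub.subtype) ⟨v2, h2⟩}
        = Submodule.torsion ℤ (↥Lsub ⧸ Isub.comap Lsub.subtype) ∧
      Nonempty (↥(Submodule.torsion ℤ (↥Lsub ⧸ Isub.comap Lsub.subtype)) ≃ₗ[ℤ]
        (ZMod 3 × ZMod 3)) := by
  refine ⟨three_v1, three_v2, v1_not, v2_not, fun h1 h2 => ?_⟩
  haveI : Fact (Nat.Prime 3) := ⟨by norm_num⟩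
  set p : Submodule ℤ ↥Lsub := Isub.comap Lsub.subtype with hp
  set u1 : ↥Lsub ⧸ p := Submodule.Quotient.mk (p := p) ⟨v1, h1⟩ with hu1
  set u2 : ↥Lsub ⧸ p := Submodule.Quotient.mk (p := p) ⟨v2, h2⟩ with hu2
  have hmem : ∀ (w : ↥Lsub), (Submodule.Quotient.mk (p := p) w = 0) ↔ (w : Wlat) ∈ Isub := by
    intro w
    rw [Submodule.Quotient.mk_eq_zero, hp, Submodule.mem_comap, Submodule.subtype_apply]
  have hz1 : (3 : ℤ) • u1 = 0 := by
    rw [hu1, ← Submodule.Quotient.mk_smul]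
    refine (hmem _).mpr ?_
    simpa using three_v1
  have hz2 : (3 : ℤ) • u2 = 0 := by
    rw [hu2, ← Submodule.Quotient.mk_smul]
    refine (hmem _).mpr ?_
    simpa using three_v2
  have hn1 : u1 ≠ 0 := fun h => v1_not ((hmem _).mp h)
  have hn2 : u2 ≠ 0 := fun h => v2_not ((hmem _).mp h)
  have hz1n : (3 : ℕ) • u1 = 0 := by
    have h' : ((3 : ℕ) : ℤ) • u1 = 0 := by exact_mod_cast hz1
    rwa [natCast_zsmul] at h'
  have hz2n : (3 : ℕ) • u2 = 0 := by
    have h' : ((3 : ℕ) : ℤ) • u2 = 0 := by exact_mod_cast hz2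
    rwa [natCast_zsmul] at h'
  have ho1 : addOrderOf u1 = 3 := addOrderOf_eq_prime hz1n hn1
  have ho2 : addOrderOf u2 = 3 := addOrderOf_eq_prime hz2n hn2
  have hker : p ≤ LinearMap.ker (Qmap.comp Lsub.subtype) := by
    intro z hz
    rw [LinearMap.mem_ker, LinearMap.comp_apply]
    exact I_le_kerQ hz
  set qbar : (↥Lsub ⧸ p) →ₗ[ℤ] ZMod 3 × ZMod 3 := Submodule.liftQ p (Qmap.comp Lsub.subtype) hker
    with hqbar
  have q1 : qbar u1 = (1, 0) := by
    rw [hqbar, hu1, Submodule.liftQ_apply, LinearMap.comp_apply]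
    exact qv11
  have q2 : qbar u2 = (0, 1) := by
    rw [hqbar, hu2, Submodule.liftQ_apply, LinearMap.comp_apply]
    exact qv22
  have qval : ∀ c d : ℤ, qbar (c • u1 + d • u2) = ((c : ZMod 3), (d : ZMod 3)) := by
    intro c d
    rw [map_add, LinearMap.map_smul, LinearMap.map_smul, q1, q2, Prod.smul_mk, Prod.smul_mk, Prod.mk_add_mk]
    simp [zsmul_eq_mul]
  have hspan : Submodule.span ℤ ({u1, u2} : Set (↥Lsub ⧸ p))
      = Submodule.torsion ℤ (↥Lsub ⧸ p) := by
    apply le_antisymm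
    · rw [Submodule.span_le]
      rintro w hw
      rcases hw with rfl | rfl
      · exact (Submodule.mem_torsion_iff _).mpr
          ⟨⟨3, mem_nonZeroDivisors_of_ne_zero (by norm_num)⟩, by rw [Submonoid.mk_smul]; exact hz1⟩
      · exact (Submodule.mem_torsion_iff _).mpr
          ⟨⟨3, mem_nonZeroDivisors_of_ne_zero (by norm_num)⟩, by rw [Submonoid.mk_smul]; exact hz2⟩
    · intro t ht
      obtain ⟨⟨n, hn⟩, hnt⟩ := (Submodule.mem_torsion_iff _).mp ht
      rw [Submonoid.mk_smul] at hnt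
      obtain ⟨xL, rfl⟩ := Submodule.Quotient.mk_surjective p t
      have hIx : n • (xL : Wlat) ∈ Isub := by
        have hmk : Submodule.Quotient.mk (p := p) (n • xL) = 0 := by
          rw [Submodule.Quotient.mk_smul]; exact hnt
        simpa using (hmem _).mp hmk
      have hne : n ≠ 0 := mem_nonZeroDivisors_iff_ne_zero.mp hn
      have hP := I_le_kerP hIx
      rw [LinearMap.mem_ker, LinearMap.map_smul, smul_eq_zero] at hP
      have hP0 : Pmap (xL : Wlat) = 0 := by
        rcases hP with h | h
        · exact absurd h hne
        · exact h
      have e1 : phi1 (xL : Wlat) = 0 := congrArg Prod.fst hP0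
      have e2 : phi2 (xL : Wlat) = 0 := congrArg Prod.fst (congrArg Prod.snd hP0)
      have e3 : phi3 (xL : Wlat) = 0 := congrArg Prod.snd (congrArg Prod.snd hP0)
      have h0 : ell (xL : Wlat).1 = ell (xL : Wlat).2 := xL.2
      have hkey := key (xL : Wlat).1 (xL : Wlat).2 h0 e1 e2 e3
      rw [Submodule.mem_span_pair]
      refine ⟨3 * (xL : Wlat).1 7 - (xL : Wlat).1 8 - 3 * (xL : Wlat).2 7 + (xL : Wlat).2 8,
        (xL : Wlat).1 0 + (xL : Wlat).1 8 - (xL : Wlat).2 0 - (xL : Wlat).2 8, ?_⟩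
      have hmkeq : (3 * (xL : Wlat).1 7 - (xL : Wlat).1 8 - 3 * (xL : Wlat).2 7 + (xL : Wlat).2 8) • u1
          + ((xL : Wlat).1 0 + (xL : Wlat).1 8 - (xL : Wlat).2 0 - (xL : Wlat).2 8) • u2
          = Submodule.Quotient.mk (p := p)
            ((3 * (xL : Wlat).1 7 - (xL : Wlat).1 8 - 3 * (xL : Wlat).2 7 + (xL : Wlat).2 8) • (⟨v1, h1⟩ : ↥Lsub)
             + ((xL : Wlat).1 0 + (xL : Wlat).1 8 - (xL : Wlat).2 0 - (xL : Wlat).2 8) • ⟨v2, h2⟩) := by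
        rw [Submodule.Quotient.mk_add, Submodule.Quotient.mk_smul, Submodule.Quotient.mk_smul,
          hu1, hu2]
      rw [hmkeq, Submodule.Quotient.eq, hp, Submodule.mem_comap, Submodule.subtype_apply]
      have hneg := Isub.neg_mem hkey
      rw [neg_sub] at hneg
      simpa using hneg
  set T := Submodule.torsion ℤ (↥Lsub ⧸ p) with hT
  set E : ↥T →ₗ[ℤ] ZMod 3 × ZMod 3 := qbar.comp T.subtype with hE
  have hEz : ∀ z : ↥T, E z = qbar (z : ↥Lsub ⧸ p) := fun z => rfl
  have hinj : Function.Injective E := by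
    intro s t hst
    have hdiff : E (s - t) = 0 := by rw [LinearMap.map_sub, hst, sub_self]
    suffices h : ∀ z : ↥T, E z = 0 → z = 0 by
      have := h _ hdiff
      rwa [sub_eq_zero] at this
    intro z hz
    have hzmem : (z : ↥Lsub ⧸ p) ∈ Submodule.span ℤ ({u1, u2} : Set (↥Lsub ⧸ p)) := by
      rw [hspan]
      exact z.2
    obtain ⟨c, d, hcd⟩ := Submodule.mem_span_pair.mp hzmem
    have hq0 : ((c : ZMod 3), (d : ZMod 3)) = (0 : ZMod 3 × ZMod 3) := by
      rw [← qval c d, hcd]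
      exact hz
    obtain ⟨hc0, hd0⟩ : (c : ZMod 3) = 0 ∧ (d : ZMod 3) = 0 := by
      simpa [Prod.ext_iff] using hq0
    have hc3 : (3 : ℤ) ∣ c := (ZMod.intCast_zmod_eq_zero_iff_dvd c 3).mp hc0
    have hd3 : (3 : ℤ) ∣ d := (ZMod.intCast_zmod_eq_zero_iff_dvd d 3).mp hd0
    obtain ⟨c', rfl⟩ := hc3
    obtain ⟨d', rfl⟩ := hd3
    have hz0 : (z : ↥Lsub ⧸ p) = 0 := by
      rw [← hcd, mul_comm (3 : ℤ) c', mul_comm (3 : ℤ) d', mul_smul, mul_smul, hz1, hz2,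
        smul_zero, smul_zero, add_zero]
    exact Subtype.ext hz0
  have hsurj : Function.Surjective E := by
    rintro ⟨s, r⟩
    obtain ⟨c, rfl⟩ := ZMod.intCast_surjective s
    obtain ⟨d, rfl⟩ := ZMod.intCast_surjective r
    have hmemT : c • u1 + d • u2 ∈ T := by
      rw [← hspan]
      exact Submodule.add_mem _
        (Submodule.smul_mem _ _ (Submodule.subset_span (Set.mem_insert _ _)))
        (Submodule.smul_mem _ _ (Submodule.subset_span (Set.mem_insert_of_mem _ rfl)))
    exact ⟨⟨_, hmemT⟩, by rw [hEz]; exact qval c d⟩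
  exact ⟨ho1, ho2, hspan, ⟨LinearEquiv.ofBijective E ⟨hinj, hsurj⟩⟩⟩
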